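/- Let F ∈ F[X_1, X_2] be nonzero with leading monomial X_1^{i_1} X_2^{i_2} with respect to the lexicographic ordering with X_2 ≺ X_1, let S_1, S_2 be finite sets of sizes s_1, s_2, and let 1 ≤ k ≤ r−1. If (r−k)·(r/(r+1))·s_1 ≤ i_1 < (r−k)s_1 and 0 ≤ i_2 < k s_2, then the number of points of S_1 × S_2 at which F has multiplicity at least r is at most s_2·(i_1/r) + (i_2/r)·(i_1/(r−k)). -/

import Mathlib

/-- The `k`-th Hasse derivative of a multivariate polynomial `f`: the coefficient of
`T^k` in `f(X + T)`. -/
noncomputable def hasseDeriv {F : Type*} [CommRing F] {m : ℕ} (k : Fin m →₀ ℕ)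
    (f : MvPolynomial (Fin m) F) : MvPolynomial (Fin m) F :=
  MvPolynomial.coeff k
    (MvPolynomial.eval₂ (MvPolynomial.C.comp MvPolynomial.C)
      (fun j => MvPolynomial.X j + MvPolynomial.C (MvPolynomial.X j)) f)

/-- `f` has multiplicity at least `r` at the point `a`: all Hasse derivatives of total
order `< r` vanish at `a`. -/
def HasMultAtLeast {F : Type*} [CommRing F] {m : ℕ} (f : MvPolynomial (Fin m) F)
    (a : Fin m → F) (r : ℕ) : Prop :=
  ∀ k : Fin m →₀ ℕ, (∑ j, k j) < r → MvPolynomial.eval a (hasseDeriv k f) = 0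

/-- The multiplicity of `f` at `a`: the largest `r` such that all Hasse derivatives of `f`
of total order `< r` vanish at `a`. -/
noncomputable def multAt {F : Type*} [CommRing F] {m : ℕ} (f : MvPolynomial (Fin m) F)
    (a : Fin m → F) : ℕ :=
  sSup {r | HasMultAtLeast f a r}

namespace TwoVarC1

open Polynomial

variable {F : Type*} [Field F]

/-- The shift homomorphism `X_j ↦ X_j + p j`. -/
noncomputable def shiftHom (p : Fin 2 → F) :
    MvPolynomial (Fin 2) F →+* MvPolynomial (Fin 2) F :=
  MvPolynomial.eval₂Hom MvPolynomial.C
    (fun j => MvPolynomial.X j + MvPolynomial.C (p j))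

lemma eval_hasseDeriv (p : Fin 2 → F) (k : Fin 2 →₀ ℕ) (f : MvPolynomial (Fin 2) F) :
    MvPolynomial.eval p (_root_.hasseDeriv k f) = MvPolynomial.coeff k (shiftHom p f) := by
  have h : (MvPolynomial.map (MvPolynomial.eval p)).comp
      (MvPolynomial.eval₂Hom (MvPolynomial.C.comp MvPolynomial.C)
        (fun j : Fin 2 => MvPolynomial.X j + MvPolynomial.C (MvPolynomial.X j)))
      = shiftHom p := by
    apply MvPolynomial.ringHom_ext <;> intro x <;>
      simp [shiftHom]
  unfold _root_.hasseDeriv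
  rw [← MvPolynomial.coe_eval₂Hom, ← MvPolynomial.coeff_map]
  congr 1
  exact RingHom.congr_fun h f

lemma hasMult_iff (f : MvPolynomial (Fin 2) F) (p : Fin 2 → F) (n : ℕ) :
    HasMultAtLeast f p n ↔
      ∀ k : Fin 2 →₀ ℕ, k 0 + k 1 < n → MvPolynomial.coeff k (shiftHom p f) = 0 := by
  unfold HasMultAtLeast
  simp_rw [eval_hasseDeriv, Fin.sum_univ_two]

/-- the pair exponent -/
noncomputable def pr (e l : ℕ) : Fin 2 →₀ ℕ := Finsupp.single 0 e + Finsupp.single 1 l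

@[simp] lemma pr_apply0 (e l : ℕ) : pr e l 0 = e := by simp [pr]
@[simp] lemma pr_apply1 (e l : ℕ) : pr e l 1 = l := by simp [pr]

lemma eq_pr_iff (d : Fin 2 →₀ ℕ) (e l : ℕ) : d = pr e l ↔ d 0 = e ∧ d 1 = l := by
  constructor
  · rintro rfl; simp
  · rintro ⟨h0, h1⟩
    ext j
    fin_cases j <;> simp [h0, h1]

noncomputable def tau : MvPolynomial (Fin 2) F →+* Polynomial (Polynomial F) :=
  MvPolynomial.eval₂Hom (Polynomial.C.comp Polynomial.C)
    (fun j => if j = 0 then Polynomial.X else Polynomial.C Polynomial.X)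

noncomputable def sigma : Polynomial (Polynomial F) →+* MvPolynomial (Fin 2) F :=
  Polynomial.eval₂RingHom
    (Polynomial.eval₂RingHom MvPolynomial.C (MvPolynomial.X 1)) (MvPolynomial.X 0)

lemma sigma_tau (f : MvPolynomial (Fin 2) F) : sigma (tau f) = f := by
  have h : (sigma.comp tau : MvPolynomial (Fin 2) F →+* MvPolynomial (Fin 2) F)
      = RingHom.id _ := by
    apply MvPolynomial.ringHom_ext
    · intro c; simp [sigma, tau]
    · intro j; fin_cases j <;> simp [sigma, tau]
  exact RingHom.congr_fun h f

lemma tau_injective : Function.Injective (tau (F := F)) :=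
  Function.LeftInverse.injective sigma_tau

lemma tau_monomial (d : Fin 2 →₀ ℕ) (c : F) :
    tau (MvPolynomial.monomial d c)
      = Polynomial.C (Polynomial.C c * Polynomial.X ^ (d 1)) * Polynomial.X ^ (d 0) := by
  rw [MvPolynomial.monomial_eq]
  rw [Finsupp.prod_pow]
  rw [Fin.prod_univ_two]
  simp only [map_mul, map_pow, tau, MvPolynomial.eval₂Hom_C, MvPolynomial.eval₂Hom_X']
  norm_num
  ring

lemma tau_coeff (f : MvPolynomial (Fin 2) F) (e l : ℕ) :
    ((tau f).coeff e).coeff l = MvPolynomial.coeff (pr e l) f := by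
  induction f using MvPolynomial.induction_on' with
  | monomial d c =>
      rw [tau_monomial, MvPolynomial.coeff_monomial]
      simp only [Polynomial.coeff_C_mul, Polynomial.coeff_X_pow, mul_ite, mul_one, mul_zero,
        apply_ite (fun q : Polynomial F => q.coeff l), Polynomial.coeff_zero]
      by_cases h0 : d 0 = e <;> by_cases h1 : d 1 = l <;>
        simp [h0, h1, eq_pr_iff] <;> intros <;> simp_all
  | add p q hp hq => simp [map_add, hp, hq]

/-- evaluation of second variable at `b`, first variable to `X`. -/
noncomputable def piB (b : F) : MvPolynomial (Fin 2) F →+* Polynomial F :=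
  MvPolynomial.eval₂Hom Polynomial.C
    (fun j => if j = 0 then Polynomial.X else Polynomial.C b)

lemma piB_eq (b : F) (f : MvPolynomial (Fin 2) F) :
    piB b f = (tau f).map (Polynomial.evalRingHom b) := by
  have h : ((Polynomial.mapRingHom (Polynomial.evalRingHom b)).comp tau
      : MvPolynomial (Fin 2) F →+* Polynomial F) = piB b := by
    apply MvPolynomial.ringHom_ext
    · intro c; simp [piB, tau]
    · intro j; fin_cases j <;> simp [piB, tau]
  exact (RingHom.congr_fun h f).symm

lemma piB0_coeff (h : MvPolynomial (Fin 2) F) (e : ℕ) :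
    (piB 0 h).coeff e = MvPolynomial.coeff (pr e 0) h := by
  rw [piB_eq, Polynomial.coeff_map, Polynomial.coe_evalRingHom,
    ← Polynomial.coeff_zero_eq_eval_zero, tau_coeff]

lemma shift_comp_piB (a b : F) :
    ((piB (0 : F)).comp (shiftHom (fun j => if j = 0 then a else b))
      : MvPolynomial (Fin 2) F →+* Polynomial F)
    = (Polynomial.eval₂RingHom Polynomial.C (Polynomial.X + Polynomial.C a)).comp (piB b) := by
  apply MvPolynomial.ringHom_ext
  · intro c; simp [piB, shiftHom]
  · intro j; fin_cases j <;> simp [piB, shiftHom]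

lemma comp_untranslate (u : Polynomial F) (a : F) :
    (u.comp (Polynomial.X + Polynomial.C a)).comp (Polynomial.X - Polynomial.C a) = u := by
  rw [Polynomial.comp_assoc]
  simp [Polynomial.add_comp]

/-- If `X^n` divides the translate `u(X + a)` then `(X - a)^n` divides `u`. -/
lemma pow_X_sub_C_dvd_of_translate (u : Polynomial F) (a : F) (n : ℕ)
    (h : Polynomial.X ^ n ∣ u.comp (Polynomial.X + Polynomial.C a)) :
    (Polynomial.X - Polynomial.C a) ^ n ∣ u := by
  obtain ⟨v, hv⟩ := h
  refine ⟨v.comp (Polynomial.X - Polynomial.C a), ?_⟩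
  conv_lhs => rw [← comp_untranslate u a]
  rw [hv, Polynomial.mul_comp, Polynomial.pow_comp, Polynomial.X_comp]

lemma coeff_X1_pow_mul (m : ℕ) (k : Fin 2 →₀ ℕ) (h : MvPolynomial (Fin 2) F) :
    MvPolynomial.coeff (k + Finsupp.single 1 m) (MvPolynomial.X 1 ^ m * h)
      = MvPolynomial.coeff k h := by
  induction m with
  | zero => simp
  | succ m ih =>
      have e1 : MvPolynomial.X (1 : Fin 2) ^ (m + 1) * h
          = MvPolynomial.X 1 * (MvPolynomial.X 1 ^ m * h) := by ring
      have e2 : k + Finsupp.single 1 (m + 1)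
          = Finsupp.single 1 1 + (k + Finsupp.single 1 m) := by
        ext j; simp [Finsupp.single_apply]; ring
      rw [e1, e2, MvPolynomial.coeff_X_mul, ih]

lemma sum_rootMultiplicity_le {q : Polynomial F} (hq : q ≠ 0) (T : Finset F) :
    ∑ a ∈ T, q.rootMultiplicity a ≤ q.natDegree := by
  classical
  have h1 : ∑ a ∈ T, q.rootMultiplicity a = ∑ a ∈ T, q.roots.count a := by
    simp [Polynomial.count_roots]
  rw [h1]
  have h2 : ∑ a ∈ T, q.roots.count a ≤ ∑ a ∈ q.roots.toFinset, q.roots.count a := by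
    rw [← Finset.sum_filter_add_sum_filter_not T (fun a => a ∈ q.roots.toFinset)]
    have h3 : ∑ a ∈ T.filter (fun a => ¬ a ∈ q.roots.toFinset), q.roots.count a = 0 := by
      apply Finset.sum_eq_zero
      intro a ha
      simp only [Finset.mem_filter] at ha
      exact Multiset.count_eq_zero_of_notMem (fun hm => ha.2 (Multiset.mem_toFinset.mpr hm))
    rw [h3, add_zero]
    exact Finset.sum_le_sum_of_subset (fun x hx => (Finset.mem_filter.mp hx).2)
  calc _ ≤ _ := h2
    _ = Multiset.card q.roots := Multiset.toFinset_sum_count_eq _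
    _ ≤ q.natDegree := Polynomial.card_roots' q

lemma row_main (f : MvPolynomial (Fin 2) F) (hf : f ≠ 0) (b : F) (m : ℕ)
    (g : MvPolynomial (Fin 2) F)
    (hfg : f = (MvPolynomial.X 1 - MvPolynomial.C b) ^ m * g)
    (hg : ¬ (MvPolynomial.X 1 - MvPolynomial.C b) ∣ g)
    (r : ℕ) (hm : m < r) (i0 : ℕ) (hdeg : ∀ e, i0 < e → (tau f).coeff e = 0)
    (T : Finset F) (hT : ∀ a ∈ T, HasMultAtLeast f (fun j => if j = 0 then a else b) r) :
    T.card * (r - m) ≤ i0 := by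
  have hg0 : g ≠ 0 := by
    rintro rfl
    exact hf (by rw [hfg, mul_zero])
  have htw : tau ((MvPolynomial.X 1 - MvPolynomial.C b : MvPolynomial (Fin 2) F))
      = Polynomial.C (Polynomial.X - Polynomial.C b) := by
    simp [tau, map_sub]
  have htauf : tau f = Polynomial.C ((Polynomial.X - Polynomial.C b) ^ m) * tau g := by
    rw [hfg, map_mul, map_pow, htw, map_pow]
  set q : Polynomial F := piB b g with hq
  have hq0 : q ≠ 0 := by
    intro h0
    apply hg
    have hdvd : Polynomial.C (Polynomial.X - Polynomial.C b) ∣ tau g := by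
      rw [Polynomial.C_dvd_iff_dvd_coeff]
      intro e
      have h1 : (piB b g).coeff e = Polynomial.eval b ((tau g).coeff e) := by
        rw [piB_eq, Polynomial.coeff_map]; rfl
      have h2 : Polynomial.eval b ((tau g).coeff e) = 0 := by
        rw [← h1, ← hq, h0, Polynomial.coeff_zero]
      exact Polynomial.dvd_iff_isRoot.mpr h2
    obtain ⟨v, hv⟩ := hdvd
    refine ⟨sigma v, ?_⟩
    have h3 := congrArg sigma hv
    rw [sigma_tau] at h3
    rw [h3, map_mul]
    congr 1
    simp [sigma]
  have hgt0 : tau g ≠ 0 := fun h => hg0 (by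
    have := tau_injective (F := F) (a₁ := g) (a₂ := 0) (by simpa using h)
    exact this)
  have hdq : q.natDegree ≤ i0 := by
    have hC : (Polynomial.C ((Polynomial.X - Polynomial.C b) ^ m) :
        Polynomial (Polynomial F)) ≠ 0 := by
      exact Polynomial.C_ne_zero.mpr (pow_ne_zero m (Polynomial.X_sub_C_ne_zero b))
    have h1 : (tau g).natDegree ≤ (tau f).natDegree := by
      rw [htauf, Polynomial.natDegree_mul hC hgt0]
      simp
    have h2 : (tau f).natDegree ≤ i0 :=
      Polynomial.natDegree_le_iff_coeff_eq_zero.mpr (fun e he => hdeg e he)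
    have h3 : q.natDegree ≤ (tau g).natDegree := by
      rw [hq, piB_eq]
      exact Polynomial.natDegree_map_le
    omega
  have hroot : ∀ a ∈ T, (r - m) ≤ q.rootMultiplicity a := by
    intro a ha
    set p : Fin 2 → F := fun j => if j = 0 then a else b with hp
    have hmul := (hasMult_iff f p r).mp (hT a ha)
    have hsw : shiftHom p ((MvPolynomial.X 1 - MvPolynomial.C b : MvPolynomial (Fin 2) F))
        = MvPolynomial.X 1 := by
      simp [shiftHom, hp]
    have hsf : shiftHom p f = MvPolynomial.X 1 ^ m * shiftHom p g := by
      rw [hfg, map_mul, map_pow, hsw]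
    have hcoe : ∀ kk : Fin 2 →₀ ℕ, kk 0 + kk 1 < r - m →
        MvPolynomial.coeff kk (shiftHom p g) = 0 := by
      intro kk hkk
      have h5 := hmul (kk + Finsupp.single 1 m)
        (by simp [Finsupp.add_apply, Finsupp.single_apply]; omega)
      rw [hsf, coeff_X1_pow_mul] at h5
      exact h5
    have hXdvd : Polynomial.X ^ (r - m) ∣ piB 0 (shiftHom p g) := by
      rw [Polynomial.X_pow_dvd_iff]
      intro e he
      rw [piB0_coeff]
      exact hcoe (pr e 0) (by simpa using he)
    have htr : piB 0 (shiftHom p g) = q.comp (Polynomial.X + Polynomial.C a) := by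
      have h6 := RingHom.congr_fun (shift_comp_piB (F := F) a b) g
      simp only [RingHom.comp_apply, Polynomial.coe_eval₂RingHom] at h6
      exact h6
    rw [htr] at hXdvd
    exact (Polynomial.le_rootMultiplicity_iff hq0).mpr
      (pow_X_sub_C_dvd_of_translate q a (r - m) hXdvd)
  calc T.card * (r - m) = ∑ _a ∈ T, (r - m) := by simp [mul_comm]
    _ ≤ ∑ a ∈ T, q.rootMultiplicity a := Finset.sum_le_sum hroot
    _ ≤ q.natDegree := sum_rootMultiplicity_le hq0 T
    _ ≤ i0 := hdq

lemma tau_w (b : F) :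
    tau ((MvPolynomial.X 1 - MvPolynomial.C b : MvPolynomial (Fin 2) F))
      = Polynomial.C (Polynomial.X - Polynomial.C b) := by
  simp [tau, map_sub]

lemma fin2_lex_lt_fst {i j : Fin 2 →₀ ℕ} (h : i 0 < j 0) : toLex i < toLex j := by
  refine Finsupp.lex_def.mpr ⟨0, fun d hd => ?_, h⟩
  exact absurd hd (Fin.not_lt.mpr (Fin.zero_le d))

lemma fin2_lex_lt_snd {i j : Fin 2 →₀ ℕ} (h0 : i 0 = j 0) (h : i 1 < j 1) :
    toLex i < toLex j := by
  refine Finsupp.lex_def.mpr ⟨1, fun d hd => ?_, h⟩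
  fin_cases d
  · exact h0
  · exact absurd hd (lt_irrefl _)

lemma row_q (A s1 rr kk mq Nq : ℚ) (hA : 0 ≤ A)
    (hk : 0 ≤ kk) (hkr : kk + 1 ≤ rr) (hm : 0 ≤ mq) (hN : 0 ≤ Nq)
    (hNs : Nq ≤ s1) (h1 : rr * (rr - kk) * s1 ≤ A * (rr + 1))
    (hcase : (mq ≤ kk ∧ Nq * (rr - mq) ≤ A) ∨ kk + 1 ≤ mq) :
    Nq ≤ A / rr + mq * A / (rr * (rr - kk)) := by
  have hr0 : 0 < rr := by linarith
  have hrk0 : 0 < rr - kk := by linarith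
  have hden : 0 < rr * (rr - kk) := mul_pos hr0 hrk0
  have key : Nq * (rr * (rr - kk)) ≤ A * (rr - kk) + mq * A := by
    rcases hcase with ⟨hmk, hNm⟩ | hk1m
    · nlinarith [mul_le_mul_of_nonneg_right hNm (show (0:ℚ) ≤ rr - kk + mq by linarith),
        mul_nonneg (mul_nonneg hN hm) (sub_nonneg.mpr hmk)]
    · nlinarith [mul_le_mul_of_nonneg_right hNs (le_of_lt hden),
        mul_le_mul_of_nonneg_left hk1m hA]
  calc Nq = Nq * (rr * (rr - kk)) / (rr * (rr - kk)) := by field_simp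
    _ ≤ (A * (rr - kk) + mq * A) / (rr * (rr - kk)) := by gcongr
    _ = A / rr + mq * A / (rr * (rr - kk)) := by field_simp

end TwoVarC1

open TwoVarC1 in
/-- **case (C.1).** Let `f ∈ F[X_1,X_2]` be nonzero with leading monomial
`X_1^{i_1} X_2^{i_2}` with respect to the lexicographic ordering with `X_2 ≺ X_1`, and let
`1 ≤ k ≤ r−1`. If `(r−k)·(r/(r+1))·s_1 ≤ i_1 < (r−k)·s_1` and `i_2 < k·s_2`, then the number
of points of `S_1 × S_2` at which `f` has multiplicity at least `r` is at most
`s_2·(i_1/r) + (i_2/r)·(i_1/(r−k))` (as rational numbers). -/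
theorem two_var_closed_formula_C1 {F : Type*} [Field F]
    (f : MvPolynomial (Fin 2) F) (hf : f ≠ 0) (i : Fin 2 →₀ ℕ)
    (hcoeff : MvPolynomial.coeff i f ≠ 0)
    (hlead : ∀ j ∈ f.support, toLex j ≤ toLex i)
    (S : Fin 2 → Finset F) (r k : ℕ) (hk1 : 1 ≤ k) (hk2 : k ≤ r - 1)
    (h1 : ((r : ℚ) - k) * ((r : ℚ) / (r + 1)) * (S 0).card ≤ (i 0 : ℚ))
    (h2 : (i 0 : ℚ) < ((r : ℚ) - k) * (S 0).card)
    (h3 : (i 1 : ℚ) < (k : ℚ) * (S 1).card) :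
    ({p : Fin 2 → F | p ∈ Fintype.piFinset S ∧ HasMultAtLeast f p r}.ncard : ℚ) ≤
      ((S 1).card : ℚ) * ((i 0 : ℚ) / r) + ((i 1 : ℚ) / r) * ((i 0 : ℚ) / ((r : ℚ) - k)) := by
  classical
  have hr2 : k + 1 ≤ r := by omega
  have hpr_i : pr (i 0) (i 1) = i := by
    ext j; fin_cases j <;> simp
  -- vanishing of high coefficients of `tau f`
  have hfdeg : ∀ e, i 0 < e → (tau f).coeff e = 0 := by
    intro e he
    apply Polynomial.ext
    intro l
    rw [tau_coeff, Polynomial.coeff_zero]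
    by_contra hne
    have hmem := MvPolynomial.mem_support_iff.mpr hne
    exact absurd (hlead _ hmem) (not_le.mpr (fin2_lex_lt_fst (by simpa using he)))
  -- the top slice polynomial
  set c : Polynomial F := (tau f).coeff (i 0) with hc
  have hci1 : c.coeff (i 1) = MvPolynomial.coeff i f := by
    rw [hc, tau_coeff, hpr_i]
  have hc0 : c ≠ 0 := by
    intro h
    exact hcoeff (by rw [← hci1, h, Polynomial.coeff_zero])
  have hcdeg : c.natDegree ≤ i 1 := by
    apply Polynomial.natDegree_le_iff_coeff_eq_zero.mpr
    intro l hl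
    rw [hc, tau_coeff]
    by_contra hne
    have hmem := MvPolynomial.mem_support_iff.mpr hne
    exact absurd (hlead _ hmem) (not_le.mpr (fin2_lex_lt_snd (by simp) (by simpa using hl)))
  -- power of (X₂ - b) dividing f divides the slice
  have hwdvd_c : ∀ (b : F) (m : ℕ),
      ((MvPolynomial.X 1 - MvPolynomial.C b : MvPolynomial (Fin 2) F)) ^ m ∣ f →
      (Polynomial.X - Polynomial.C b) ^ m ∣ c := by
    intro b m ⟨h, hh⟩
    refine ⟨(tau h).coeff (i 0), ?_⟩
    rw [hc, hh, map_mul, map_pow, tau_w, ← map_pow, Polynomial.coeff_C_mul]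
  have hm_le : ∀ (b : F) (m : ℕ),
      ((MvPolynomial.X 1 - MvPolynomial.C b : MvPolynomial (Fin 2) F)) ^ m ∣ f →
      m ≤ i 1 := by
    intro b m hd
    have h4 := Polynomial.natDegree_le_of_dvd (hwdvd_c b m hd) hc0
    rw [Polynomial.natDegree_pow, Polynomial.natDegree_X_sub_C, mul_one] at h4
    omega
  have hex : ∀ b : F, ∃ m : ℕ,
      ¬ ((MvPolynomial.X 1 - MvPolynomial.C b : MvPolynomial (Fin 2) F)) ^ (m + 1) ∣ f := by
    intro b
    refine ⟨i 1, fun hd => ?_⟩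
    have := hm_le b (i 1 + 1) hd
    omega
  have hmbex : ∀ b : F, ∃ m : ℕ,
      ((MvPolynomial.X 1 - MvPolynomial.C b : MvPolynomial (Fin 2) F)) ^ m ∣ f ∧
      ¬ ((MvPolynomial.X 1 - MvPolynomial.C b : MvPolynomial (Fin 2) F)) ^ (m + 1) ∣ f := by
    intro b
    refine ⟨Nat.find (hex b), ?_, Nat.find_spec (hex b)⟩
    rcases Nat.eq_zero_or_pos (Nat.find (hex b)) with h | h
    · rw [h, pow_zero]; exact one_dvd f
    · have h2 := Nat.find_min (hex b) (show Nat.find (hex b) - 1 < Nat.find (hex b) by omega)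
      rw [not_not] at h2
      have h3 : Nat.find (hex b) - 1 + 1 = Nat.find (hex b) := by omega
      rwa [h3] at h2
  choose mb hmb_dvd hmb_spec using hmbex
  have hgex : ∀ b : F, ∃ g : MvPolynomial (Fin 2) F,
      f = ((MvPolynomial.X 1 - MvPolynomial.C b : MvPolynomial (Fin 2) F)) ^ (mb b) * g ∧
      ¬ ((MvPolynomial.X 1 - MvPolynomial.C b : MvPolynomial (Fin 2) F)) ∣ g := by
    intro b
    obtain ⟨g, hgeq⟩ := hmb_dvd b
    refine ⟨g, hgeq, fun hdg => hmb_spec b ?_⟩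
    obtain ⟨g', hg'⟩ := hdg
    exact ⟨g', by rw [hgeq, hg']; ring⟩
  choose g hgeq hgnd using hgex
  -- total multiplicity of rows is bounded by i 1
  have hsum_mb : ∑ b ∈ S 1, mb b ≤ i 1 := by
    have h5 : ∀ b ∈ S 1, mb b ≤ c.rootMultiplicity b := fun b _ =>
      (Polynomial.le_rootMultiplicity_iff hc0).mpr (hwdvd_c b (mb b) (hmb_dvd b))
    calc ∑ b ∈ S 1, mb b ≤ ∑ b ∈ S 1, c.rootMultiplicity b := Finset.sum_le_sum h5
      _ ≤ c.natDegree := sum_rootMultiplicity_le hc0 (S 1)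
      _ ≤ i 1 := hcdeg
  -- row sets
  set rowT : F → Finset F := fun b =>
    (S 0).filter (fun a => HasMultAtLeast f (fun j => if j = 0 then a else b) r) with hrowT
  have hrow_card : ∀ b : F, mb b ≤ k → (rowT b).card * (r - mb b) ≤ i 0 := by
    intro b hbk
    exact row_main f hf b (mb b) (g b) (hgeq b) (hgnd b) r (by omega) (i 0) hfdeg _
      (fun a ha => (Finset.mem_filter.mp ha).2)
  -- counting set as finset
  set ZF : Finset (Fin 2 → F) :=
    (Fintype.piFinset S).filter (fun p => HasMultAtLeast f p r) with hZF
  have hset : {p : Fin 2 → F | p ∈ Fintype.piFinset S ∧ HasMultAtLeast f p r} = ↑ZF := by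
    ext p; simp [hZF]
  rw [hset, Set.ncard_coe_finset]
  have hcard : ZF.card = ∑ b ∈ S 1, (ZF.filter (fun p => p 1 = b)).card := by
    apply Finset.card_eq_sum_card_fiberwise
    intro p hp
    exact (Fintype.mem_piFinset.mp (Finset.mem_filter.mp hp).1) 1
  have hfiber : ∀ b ∈ S 1, (ZF.filter (fun p => p 1 = b)).card ≤ (rowT b).card := by
    intro b _
    apply Finset.card_le_card_of_injOn (fun p => p 0)
    · intro p hp
      simp only [Finset.mem_coe, Finset.mem_filter, hZF] at hp
      obtain ⟨⟨hp1, hp2⟩, hp3⟩ := hp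
      refine Finset.mem_filter.mpr ⟨Fintype.mem_piFinset.mp hp1 0, ?_⟩
      have hpe : (fun j : Fin 2 => if j = 0 then p 0 else b) = p := by
        funext j; fin_cases j <;> simp [hp3]
      rw [hpe]; exact hp2
    · intro p hp q hq hpq
      have hp3 := (Finset.mem_filter.mp hp).2
      have hq3 := (Finset.mem_filter.mp hq).2
      funext j; fin_cases j
      · exact hpq
      · show p 1 = q 1
        rw [hp3, hq3]
  -- rational arithmetic
  have hkrQ : (k : ℚ) + 1 ≤ (r : ℚ) := by exact_mod_cast hr2
  have hAnn : (0:ℚ) ≤ (i 0 : ℚ) := Nat.cast_nonneg _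
  have h1' : (r:ℚ) * ((r:ℚ) - (k:ℚ)) * ((S 0).card : ℚ) ≤ (i 0 : ℚ) * ((r:ℚ)+1) := by
    have hpos : (0:ℚ) < (r:ℚ) + 1 := by positivity
    have hne : ((r:ℚ)+1) ≠ 0 := ne_of_gt hpos
    calc (r:ℚ)*((r:ℚ)-(k:ℚ))*((S 0).card:ℚ)
        = ((r:ℚ)-(k:ℚ))*((S 0).card:ℚ)*(((r:ℚ)/((r:ℚ)+1))*((r:ℚ)+1)) := by
          rw [div_mul_cancel₀ _ hne]; ring
      _ = ((r:ℚ) - (k:ℚ)) * ((r:ℚ)/((r:ℚ)+1)) * ((S 0).card : ℚ) * ((r:ℚ)+1) := by ring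
      _ ≤ (i 0 : ℚ) * ((r:ℚ)+1) := mul_le_mul_of_nonneg_right h1 (le_of_lt hpos)
  have hrowQ : ∀ b ∈ S 1, ((rowT b).card : ℚ) ≤
      (i 0:ℚ)/(r:ℚ) + (mb b : ℚ) * (i 0:ℚ)/((r:ℚ)*((r:ℚ)-(k:ℚ))) := by
    intro b _
    have hcaseb : ((mb b : ℚ) ≤ (k:ℚ) ∧
        ((rowT b).card : ℚ) * ((r:ℚ) - (mb b : ℚ)) ≤ (i 0 : ℚ)) ∨
        (k:ℚ) + 1 ≤ (mb b : ℚ) := by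
      by_cases hbk : mb b ≤ k
      · left
        refine ⟨by exact_mod_cast hbk, ?_⟩
        have h9 := hrow_card b hbk
        have hmr : mb b ≤ r := hbk.trans (Nat.le_of_succ_le hr2)
        have h11 := (Nat.cast_le (α := ℚ)).mpr h9
        push_cast [Nat.cast_sub hmr] at h11
        linarith
      · right
        have h12 : k + 1 ≤ mb b := Nat.not_le.mp hbk
        exact_mod_cast h12
    have hNs : ((rowT b).card : ℚ) ≤ ((S 0).card : ℚ) := by
      exact_mod_cast Finset.card_filter_le _ _
    exact row_q (i 0 : ℚ) ((S 0).card : ℚ) (r:ℚ) (k:ℚ) (mb b : ℚ) ((rowT b).card : ℚ)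
      hAnn (Nat.cast_nonneg _) hkrQ (Nat.cast_nonneg _) (Nat.cast_nonneg _)
      hNs h1' hcaseb
  calc (ZF.card : ℚ) = ∑ b ∈ S 1, ((ZF.filter (fun p => p 1 = b)).card : ℚ) := by
        rw [hcard]; push_cast; ring
    _ ≤ ∑ b ∈ S 1, ((rowT b).card : ℚ) :=
        Finset.sum_le_sum (fun b hb => by exact_mod_cast hfiber b hb)
    _ ≤ ∑ b ∈ S 1, ((i 0:ℚ)/(r:ℚ) + (mb b : ℚ) * (i 0:ℚ)/((r:ℚ)*((r:ℚ)-(k:ℚ)))) :=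
        Finset.sum_le_sum hrowQ
    _ = ((S 1).card : ℚ) * ((i 0:ℚ)/(r:ℚ))
          + (∑ b ∈ S 1, (mb b : ℚ)) * ((i 0:ℚ)/((r:ℚ)*((r:ℚ)-(k:ℚ)))) := by
        rw [Finset.sum_add_distrib, Finset.sum_const, nsmul_eq_mul, Finset.sum_mul]
        congr 1
        exact Finset.sum_congr rfl (fun x _ => mul_div_assoc _ _ _)
    _ ≤ ((S 1).card : ℚ) * ((i 0:ℚ)/(r:ℚ))
          + (i 1 : ℚ) * ((i 0:ℚ)/((r:ℚ)*((r:ℚ)-(k:ℚ)))) := by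
        have hsumQ : (∑ b ∈ S 1, (mb b : ℚ)) ≤ (i 1 : ℚ) := by
          exact_mod_cast hsum_mb
        have hpos2 : (0:ℚ) ≤ (i 0:ℚ)/((r:ℚ)*((r:ℚ)-(k:ℚ))) := by
          apply div_nonneg hAnn
          nlinarith
        nlinarith [mul_le_mul_of_nonneg_right hsumQ hpos2]
    _ = ((S 1).card : ℚ) * ((i 0:ℚ)/(r:ℚ)) + ((i 1:ℚ)/(r:ℚ)) * ((i 0:ℚ)/((r:ℚ)-(k:ℚ))) := by
        congr 1
        rw [div_mul_div_comm, ← mul_div_assoc]
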